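/- Let d, k be natural numbers and t : ℕ → ℕ a finitely supported function with f₀ = Σ_{r≥2} t_r and f₁ = Σ_{r≥2} r·t_r. If the inequality 2f₁ - 9f₀ + d + 4t₂ - 8k ≤ 0 holds together with the combinatorial count 4·C(k,2) + C(d,2) + 2kd = Σ_{r≥2} C(r,2)·t_r, then 8k + t₂ + 3t₃ + t₄ ≥ d + Σ_{r≥5}(2r - 9)·t_r. -/

import Mathlib

/-- Derivation of the Hirzebruch-type inequality from the BMY inequality. -/
theorem hirzebruch_type_from_BMY (d k : ℕ) (t : ℕ → ℕ) (S : Finset ℕ)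
    (hsupp : ∀ r ∉ S, t r = 0) (hlow : ∀ r < 2, t r = 0)
    (f0 f1 : ℤ)
    (hf0 : f0 = ∑ r ∈ S, (t r : ℤ))
    (hf1 : f1 = ∑ r ∈ S, (r : ℤ) * t r)
    (hBMY : 2 * f1 - 9 * f0 + d + 4 * t 2 - 8 * k ≤ 0)
    (hcount : 4 * Nat.choose k 2 + Nat.choose d 2 + 2 * k * d
      = ∑ r ∈ S, Nat.choose r 2 * t r) :
    (8 * k + t 2 + 3 * t 3 + t 4 : ℤ)
      ≥ d + ∑ r ∈ S.filter (fun r => 5 ≤ r), (2 * (r : ℤ) - 9) * t r := by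
  classical
  set g : ℕ → ℤ := fun r => (9 - 2 * (r : ℤ)) * t r with hg
  set A := S.filter (fun r => r < 5) with hA
  set B := S.filter (fun r => 5 ≤ r) with hB
  have hfil : S.filter (fun r => ¬ r < 5) = B := by
    rw [hB]; apply Finset.filter_congr; intro r _; simp [Nat.not_lt]
  have hsplit : ∑ r ∈ S, g r = ∑ r ∈ A, g r + ∑ r ∈ B, g r := by
    rw [hA, ← hfil, Finset.sum_filter_add_sum_filter_not]
  have hAsum : ∑ r ∈ A, g r = 5 * t 2 + 3 * t 3 + t 4 := by
    have h1 : ∑ r ∈ A, g r = ∑ r ∈ A ∪ {2, 3, 4}, g r := by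
      apply Finset.sum_subset Finset.subset_union_left
      intro r hr hra
      have hrT : r ∈ ({2, 3, 4} : Finset ℕ) := by
        rcases Finset.mem_union.mp hr with h | h
        · exact absurd h hra
        · exact h
      have hr5 : r < 5 := by
        simp only [Finset.mem_insert, Finset.mem_singleton] at hrT; omega
      have : r ∉ S := fun hS => hra (Finset.mem_filter.mpr ⟨hS, hr5⟩)
      simp [hg, hsupp r this]
    have h2 : ∑ r ∈ ({2, 3, 4} : Finset ℕ), g r = ∑ r ∈ A ∪ {2, 3, 4}, g r := by
      apply Finset.sum_subset Finset.subset_union_right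
      intro r hr hrT
      rcases Finset.mem_union.mp hr with h | h
      · have := Finset.mem_filter.mp h
        have hr2 : r < 2 := by
          simp only [Finset.mem_insert, Finset.mem_singleton] at hrT; omega
        simp [hg, hlow r hr2]
      · exact absurd h hrT
    rw [h1, ← h2]
    norm_num [hg, Finset.sum_insert, Finset.mem_insert]
    push_cast
    ring
  have hf : 9 * f0 - 2 * f1 = ∑ r ∈ S, g r := by
    rw [hf0, hf1, Finset.mul_sum, Finset.mul_sum, ← Finset.sum_sub_distrib]
    exact Finset.sum_congr rfl fun r _ => by rw [hg]; ring
  have hneg : ∑ r ∈ B, (2 * (r : ℤ) - 9) * t r = -∑ r ∈ B, g r := by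
    rw [← Finset.sum_neg_distrib]
    exact Finset.sum_congr rfl fun r _ => by rw [hg]; ring
  rw [hB] at hneg
  linarith [hsplit, hAsum, hf, hneg, hBMY]
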